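/- Let $z, a \in \mathbb{B}_n$ and let $\gamma:[0,1]\to\mathbb{B}_n$ be the geodesic in the Bergman metric from $z$ to $a$. Then for every point $u = \gamma(t)$ on this geodesic, $|1 - \langle a, u\rangle| \le 2|1-\langle a, z\rangle|$. -/

import Mathlib

open MeasureTheory Complex
open scoped ENNReal Real

noncomputable section

/-- Borel σ-algebra on `EuclideanSpace ℂ (Fin n)`. -/
instance (n : ℕ) : MeasurableSpace (EuclideanSpace ℂ (Fin n)) := borel _
instance (n : ℕ) : BorelSpace (EuclideanSpace ℂ (Fin n)) := ⟨rfl⟩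

/-- Lebesgue measure on `EuclideanSpace ℂ (Fin n)`, obtained from the product
Lebesgue measure on `Fin n → ℂ`. -/
instance (n : ℕ) : MeasureSpace (EuclideanSpace ℂ (Fin n)) :=
  ⟨Measure.map (WithLp.equiv 2 (Fin n → ℂ)).symm volume⟩

variable (n : ℕ)

/-- The open unit ball `𝔹_n` of `ℂ^n`. -/
def Ball : Set (EuclideanSpace ℂ (Fin n)) := Metric.ball 0 1

/-- The Hermitian inner product `⟨z,w⟩ = ∑ z_j * conj (w_j)` (holomorphic in the
first variable, as used in the paper). -/
def hip (z w : EuclideanSpace ℂ (Fin n)) : ℂ := inner ℂ w z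

/-- Normalized Lebesgue volume measure `dv` on the unit ball (total mass one). -/
def nuV : Measure (EuclideanSpace ℂ (Fin n)) :=
  (volume (Ball n))⁻¹ • volume.restrict (Ball n)

/-- The weighted measure `dv_α = c_α (1-|z|^2)^α dv`, normalized to have mass one. -/
def nuA (α : ℝ) : Measure (EuclideanSpace ℂ (Fin n)) :=
  (((nuV n).withDensity fun z => ENNReal.ofReal ((1 - ‖z‖ ^ 2) ^ α)) Set.univ)⁻¹ •
    ((nuV n).withDensity fun z => ENNReal.ofReal ((1 - ‖z‖ ^ 2) ^ α))

/-- The Möbius-invariant measure `dλ_n = (1-|z|^2)^{-(n+1)} dv`. -/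
def lamN : Measure (EuclideanSpace ℂ (Fin n)) :=
  (nuV n).withDensity fun z => ENNReal.ofReal ((1 - ‖z‖ ^ 2) ^ (-(n + 1 : ℝ)))

open scoped Classical in
/-- Orthogonal projection of `w` onto the complex line `ℂ z`. -/
def projLine (z w : EuclideanSpace ℂ (Fin n)) : EuclideanSpace ℂ (Fin n) :=
  if z = 0 then 0 else (hip n w z / hip n z z) • z

/-- The Möbius automorphism `φ_z` of the unit ball interchanging `0` and `z`. -/
def mobius (z w : EuclideanSpace ℂ (Fin n)) : EuclideanSpace ℂ (Fin n) :=
  ((1 : ℂ) - hip n w z)⁻¹ •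
    (z - projLine n z w - (Real.sqrt (1 - ‖z‖ ^ 2) : ℂ) • (w - projLine n z w))

/-- The Bergman (hyperbolic) distance on the unit ball. -/
def bdist (z w : EuclideanSpace ℂ (Fin n)) : ℝ :=
  (1 / 2) * Real.log ((1 + ‖mobius n z w‖) / (1 - ‖mobius n z w‖))

/-- The Bergman metric ball `D(z,r)`. -/
def Dball (z : EuclideanSpace ℂ (Fin n)) (r : ℝ) : Set (EuclideanSpace ℂ (Fin n)) :=
  {w | w ∈ Ball n ∧ bdist n z w < r}

/-- The average `f̂_r(z)` of `f` over `D(z,r)` with respect to `dv_α`. -/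
def favg (α r : ℝ) (f : EuclideanSpace ℂ (Fin n) → ℂ) (z : EuclideanSpace ℂ (Fin n)) : ℂ :=
  ((nuA n α (Dball n z r)).toReal)⁻¹ • ∫ w in Dball n z r, f w ∂nuA n α

/-- The local mean oscillation `MO_r(f)(z)` in the Bergman metric. -/
def MO (α r : ℝ) (f : EuclideanSpace ℂ (Fin n) → ℂ) (z : EuclideanSpace ℂ (Fin n)) : ℝ :=
  Real.sqrt (((nuA n α (Dball n z r)).toReal)⁻¹ *
    ∫ w in Dball n z r, ‖f w - favg n α r f z‖ ^ 2 ∂nuA n α)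

/-- The kernel `K^t_z(w) = (1 - ⟨w,z⟩)^{-(n+1+α+t)}`. -/
def Kt (α t : ℝ) (z w : EuclideanSpace ℂ (Fin n)) : ℂ :=
  ((1 : ℂ) - hip n w z) ^ (-(((n : ℝ) + 1 + α + t) : ℂ))

/-- The norm `‖K^t_z‖_α` in `L^2(dv_α)`. -/
def KtNorm (α t : ℝ) (z : EuclideanSpace ℂ (Fin n)) : ℝ :=
  Real.sqrt (∫ w, ‖Kt n α t z w‖ ^ 2 ∂nuA n α)

/-- The normalized kernel `h^t_z = K^t_z / ‖K^t_z‖_α`. -/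
def ht (α t : ℝ) (z w : EuclideanSpace ℂ (Fin n)) : ℂ :=
  (KtNorm n α t z : ℂ)⁻¹ * Kt n α t z w

/-- The Berezin-type transform `B_{α,t}(g)(z) = ∫ g |h^t_z|^2 dv_α` (complex valued). -/
def berezin (α t : ℝ) (g : EuclideanSpace ℂ (Fin n) → ℂ) (z : EuclideanSpace ℂ (Fin n)) : ℂ :=
  ∫ w, g w * ((‖ht n α t z w‖ ^ 2 : ℝ) : ℂ) ∂nuA n α

/-- The Berezin-type transform of a real-valued function. -/
def berezinR (α t : ℝ) (g : EuclideanSpace ℂ (Fin n) → ℝ) (z : EuclideanSpace ℂ (Fin n)) : ℝ :=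
  ∫ w, g w * ‖ht n α t z w‖ ^ 2 ∂nuA n α

/-- The mean oscillation function `MO_{α,t}(f)(z)`. -/
def MOt (α t : ℝ) (f : EuclideanSpace ℂ (Fin n) → ℂ) (z : EuclideanSpace ℂ (Fin n)) : ℝ :=
  Real.sqrt (berezinR n α t (fun w => ‖f w‖ ^ 2) z - ‖berezin n α t f z‖ ^ 2)

/-- The Bergman projection `P_γ` at the level of functions. -/
def Pproj (γ : ℝ) (f : EuclideanSpace ℂ (Fin n) → ℂ) (z : EuclideanSpace ℂ (Fin n)) : ℂ :=
  ∫ w, f w / ((1 : ℂ) - hip n z w) ^ ((((n : ℝ) + 1 + γ) : ℂ)) ∂nuA n γ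

/-- The Hankel "operator" `H^γ_f g = (I - P_γ)(f g)` at the level of functions. -/
def hankelFun (γ : ℝ) (f g : EuclideanSpace ℂ (Fin n) → ℂ) :
    EuclideanSpace ℂ (Fin n) → ℂ :=
  fun z => f z * g z - Pproj n γ (fun w => f w * g w) z

/-- The `L^2(dv_α)` norm of a function. -/
def l2norm (α : ℝ) (g : EuclideanSpace ℂ (Fin n) → ℂ) : ℝ :=
  Real.sqrt (∫ w, ‖g w‖ ^ 2 ∂nuA n α)

/-- `f` is locally square integrable on the ball: square-integrable with respect to
`dv_α` on every Bergman metric ball. -/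
def LocL2 (α : ℝ) (f : EuclideanSpace ℂ (Fin n) → ℂ) : Prop :=
  ∀ z r, IntegrableOn f (Dball n z r) (nuA n α) ∧
    IntegrableOn (fun w => ‖f w‖ ^ 2) (Dball n z r) (nuA n α)

/-- A sequence is separated in the Bergman metric. -/
def Separated (a : ℕ → EuclideanSpace ℂ (Fin n)) : Prop :=
  (∀ k, a k ∈ Ball n) ∧ ∃ δ > 0, ∀ i j, i ≠ j → bdist n (a i) (a j) > δ

/-- An `r`-lattice in the Bergman metric. -/
def IsLattice (r : ℝ) (a : ℕ → EuclideanSpace ℂ (Fin n)) : Prop :=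
  (∀ k, a k ∈ Ball n) ∧ (Ball n ⊆ ⋃ k, Dball n (a k) r) ∧
    (Pairwise fun i j => Disjoint (Dball n (a i) (r / 4)) (Dball n (a j) (r / 4))) ∧
    ∃ N : ℕ, ∀ z, {k | z ∈ Dball n (a k) (4 * r)}.Finite ∧
      {k | z ∈ Dball n (a k) (4 * r)}.ncard ≤ N

/-- The `k`-th approximation number of a bounded operator (equal to the `k`-th
singular value for compact operators between Hilbert spaces). -/
def approxNum {H K : Type*} [NormedAddCommGroup H] [NormedSpace ℂ H]
    [NormedAddCommGroup K] [NormedSpace ℂ K] (T : H →L[ℂ] K) (k : ℕ) : ℝ :=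
  sInf ((fun F : H →L[ℂ] K => ‖T - F‖) ''
    {F | Module.rank ℂ (LinearMap.range (F : H →ₗ[ℂ] K)) ≤ (k : Cardinal)})

/-- Membership in the Schatten ideal `S_p`. -/
def MemSchatten {H K : Type*} [NormedAddCommGroup H] [NormedSpace ℂ H]
    [NormedAddCommGroup K] [NormedSpace ℂ K] (p : ℝ) (T : H →L[ℂ] K) : Prop :=
  Summable fun k => approxNum T k ^ p

/-- The Schatten `p`-norm. -/
def schattenNorm {H K : Type*} [NormedAddCommGroup H] [NormedSpace ℂ H]
    [NormedAddCommGroup K] [NormedSpace ℂ K] (p : ℝ) (T : H →L[ℂ] K) : ℝ :=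
  (∑' k, approxNum T k ^ p) ^ (1 / p)

/-- The weighted Lebesgue space `L^2_α = L^2(𝔹_n, dv_α)`. -/
abbrev Lsp (α : ℝ) := MeasureTheory.Lp ℂ 2 (nuA n α)

end
open scoped ComplexInnerProductSpace

namespace Stmt4Aux

variable {n : ℕ}

lemma hip_eq (z w : EuclideanSpace ℂ (Fin n)) : hip n w z = ⟪z, w⟫ := rfl

lemma projLine_eq (z w : EuclideanSpace ℂ (Fin n)) (hz : z ≠ 0) :
    projLine n z w = ((⟪z, w⟫ : ℂ) / (⟪z, z⟫ : ℂ)) • z := by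
  unfold projLine
  rw [if_neg hz]; rfl

/-- `⟪z, V⟫` where `V` is the numerator vector of `mobius`. -/
lemma inner_z_V (z w : EuclideanSpace ℂ (Fin n)) (hz : z ≠ 0) :
    (⟪z, z - projLine n z w - (Real.sqrt (1 - ‖z‖ ^ 2) : ℂ) • (w - projLine n z w)⟫ : ℂ)
      = (‖z‖ ^ 2 : ℝ) - ⟪z, w⟫ := by
  have hZ : (⟪z, z⟫ : ℂ) = ((‖z‖ ^ 2 : ℝ) : ℂ) := by exact_mod_cast inner_self_eq_norm_sq_to_K z
  have hZ0 : (⟪z, z⟫ : ℂ) ≠ 0 := inner_self_ne_zero.mpr hz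
  rw [projLine_eq z w hz]
  simp only [inner_sub_right, inner_smul_right, hZ]
  rw [hZ] at hZ0
  generalize (⟪z, w⟫ : ℂ) = q
  set Z : ℂ := ((‖z‖ ^ 2 : ℝ) : ℂ) with hZdef
  field_simp
  ring

/-- `⟪V, V⟫` where `V` is the numerator vector of `mobius`. -/
lemma inner_V_V (z w : EuclideanSpace ℂ (Fin n)) (hz : z ≠ 0) (hz1 : ‖z‖ ≤ 1) :
    (⟪z - projLine n z w - (Real.sqrt (1 - ‖z‖ ^ 2) : ℂ) • (w - projLine n z w),
      z - projLine n z w - (Real.sqrt (1 - ‖z‖ ^ 2) : ℂ) • (w - projLine n z w)⟫ : ℂ)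
      = (1 - ⟪z, w⟫) * (1 - ⟪w, z⟫) - (1 - (‖z‖ ^ 2 : ℝ)) * (1 - (‖w‖ ^ 2 : ℝ)) := by
  have hZ : (⟪z, z⟫ : ℂ) = ((‖z‖ ^ 2 : ℝ) : ℂ) := by exact_mod_cast inner_self_eq_norm_sq_to_K z
  have hW : (⟪w, w⟫ : ℂ) = ((‖w‖ ^ 2 : ℝ) : ℂ) := by exact_mod_cast inner_self_eq_norm_sq_to_K w
  have hZ0 : (⟪z, z⟫ : ℂ) ≠ 0 := inner_self_ne_zero.mpr hz
  have hqc : (⟪w, z⟫ : ℂ) = (starRingEnd ℂ) ⟪z, w⟫ := (inner_conj_symm _ _).symm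
  have hs : ((Real.sqrt (1 - ‖z‖ ^ 2) : ℝ) : ℂ) ^ 2 = 1 - ((‖z‖ ^ 2 : ℝ) : ℂ) := by
    have : Real.sqrt (1 - ‖z‖ ^ 2) ^ 2 = 1 - ‖z‖ ^ 2 :=
      Real.sq_sqrt (by nlinarith [norm_nonneg z])
    exact_mod_cast this
  have hsc : (starRingEnd ℂ) ((Real.sqrt (1 - ‖z‖ ^ 2) : ℝ) : ℂ)
      = ((Real.sqrt (1 - ‖z‖ ^ 2) : ℝ) : ℂ) := Complex.conj_ofReal _
  rw [projLine_eq z w hz]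
  simp only [inner_sub_left, inner_sub_right, inner_smul_left, inner_smul_right, hZ, hW, hqc,
    map_div₀, hsc, Complex.conj_ofReal, map_mul]
  generalize (⟪z, w⟫ : ℂ) = q
  set s : ℂ := ((Real.sqrt (1 - ‖z‖ ^ 2) : ℝ) : ℂ) with hsdef
  set Z : ℂ := ((‖z‖ ^ 2 : ℝ) : ℂ) with hZdef
  set W : ℂ := ((‖w‖ ^ 2 : ℝ) : ℂ) with hWdef
  rw [hZ] at hZ0
  set qc : ℂ := (starRingEnd ℂ) q with hqcdef
  have h1 : qc / Z * Z = qc := div_mul_cancel₀ _ hZ0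
  rw [h1]
  field_simp
  ring_nf
  linear_combination (Z * W - qc * q) * hs

end Stmt4Aux
namespace Stmt4Aux

lemma mobius_zero (n : ℕ) (w : EuclideanSpace ℂ (Fin n)) : mobius n 0 w = -w := by
  unfold mobius projLine
  simp [hip]

lemma hip_zero (n : ℕ) (w : EuclideanSpace ℂ (Fin n)) : hip n w 0 = 0 := by
  simp [hip]

lemma hip_zero' (n : ℕ) (w : EuclideanSpace ℂ (Fin n)) : hip n 0 w = 0 := by
  simp [hip]

lemma norm_hip_le (n : ℕ) (z w : EuclideanSpace ℂ (Fin n)) :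
    ‖hip n w z‖ ≤ ‖z‖ * ‖w‖ := norm_inner_le_norm z w

lemma one_sub_hip_ne (n : ℕ) {z w : EuclideanSpace ℂ (Fin n)} (hz : ‖z‖ < 1)
    (hw : ‖w‖ < 1) : (1 : ℂ) - hip n w z ≠ 0 := by
  intro h
  have h2 : ‖hip n w z‖ ≤ ‖z‖ * ‖w‖ := norm_hip_le n z w
  have h3 : hip n w z = 1 := by linear_combination -h
  rw [h3] at h2
  simp at h2
  nlinarith [norm_nonneg z, norm_nonneg w]

end Stmt4Aux
namespace Stmt4Aux

/-- Rudin's identity: `|1-⟨w,z⟩|² (1-|φ_z(w)|²) = (1-|z|²)(1-|w|²)`. -/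
lemma mob_id1 (n : ℕ) {z w : EuclideanSpace ℂ (Fin n)} (hz : ‖z‖ < 1) (hw : ‖w‖ < 1) :
    ‖(1 : ℂ) - hip n w z‖ ^ 2 * (1 - ‖mobius n z w‖ ^ 2)
      = (1 - ‖z‖ ^ 2) * (1 - ‖w‖ ^ 2) := by
  rcases eq_or_ne z 0 with rfl | hz0
  · rw [mobius_zero, hip_zero]
    simp
  · have hq : (1 : ℂ) - hip n w z ≠ 0 := one_sub_hip_ne n hz hw
    set V := z - projLine n z w - (Real.sqrt (1 - ‖z‖ ^ 2) : ℂ) • (w - projLine n z w) with hV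
    have hmob : mobius n z w = ((1 : ℂ) - hip n w z)⁻¹ • V := rfl
    have hnm : ‖mobius n z w‖ = ‖(1 : ℂ) - hip n w z‖⁻¹ * ‖V‖ := by
      rw [hmob, norm_smul, norm_inv]
    have hq0 : ‖(1 : ℂ) - hip n w z‖ ≠ 0 := norm_ne_zero_iff.mpr hq
    have key : ‖(1 : ℂ) - hip n w z‖ ^ 2 - ‖V‖ ^ 2 = (1 - ‖z‖ ^ 2) * (1 - ‖w‖ ^ 2) := by
      have hVV : ((‖V‖ ^ 2 : ℝ) : ℂ) = (⟪z, w⟫ - 1) * (⟪w, z⟫ - 1)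
          - (1 - (‖z‖ ^ 2 : ℝ)) * (1 - (‖w‖ ^ 2 : ℝ)) := by
        have := inner_V_V z w hz0 hz.le
        rw [← hV] at this
        have h2 : ((‖V‖ ^ 2 : ℝ) : ℂ) = ⟪V, V⟫ := by
          exact_mod_cast (inner_self_eq_norm_sq_to_K V).symm
        rw [h2, this]; ring
      have hq2 : ((‖(1 : ℂ) - hip n w z‖ ^ 2 : ℝ) : ℂ)
          = (1 - ⟪z, w⟫) * (1 - ⟪w, z⟫) := by
        have h3 : (⟪w, z⟫ : ℂ) = (starRingEnd ℂ) ⟪z, w⟫ := (inner_conj_symm _ _).symm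
        have h4 : hip n w z = ⟪z, w⟫ := rfl
        rw [h4, h3]
        have : (1 - (⟪z, w⟫ : ℂ)) * (starRingEnd ℂ) (1 - ⟪z, w⟫)
            = ((Complex.normSq (1 - ⟪z, w⟫) : ℝ) : ℂ) := Complex.mul_conj _
        rw [show (1 - (⟪z, w⟫:ℂ)) * (1 - (starRingEnd ℂ) ⟪z, w⟫)
            = (1 - (⟪z, w⟫:ℂ)) * (starRingEnd ℂ) (1 - ⟪z, w⟫) by rw [map_sub, map_one],
          this]
        norm_cast
        rw [Complex.normSq_eq_norm_sq]
      have h6 : ((‖(1 : ℂ) - hip n w z‖ ^ 2 - ‖V‖ ^ 2 : ℝ) : ℂ)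
          = (((1 - ‖z‖ ^ 2) * (1 - ‖w‖ ^ 2) : ℝ) : ℂ) := by
        push_cast at hVV hq2 ⊢
        linear_combination hq2 - hVV
      exact_mod_cast h6
    have h5 : ‖(1 : ℂ) - hip n w z‖ ^ 2 * (1 - (‖(1 : ℂ) - hip n w z‖⁻¹ * ‖V‖) ^ 2)
        = ‖(1 : ℂ) - hip n w z‖ ^ 2 - ‖V‖ ^ 2 := by
      have h7 : (‖(1 : ℂ) - hip n w z‖⁻¹ * ‖V‖) ^ 2 = ‖V‖ ^ 2 / ‖(1 : ℂ) - hip n w z‖ ^ 2 := by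
        rw [mul_pow, inv_pow]; ring
      rw [mul_sub, mul_one, h7, mul_div_cancel₀ _ (pow_ne_zero 2 hq0)]
    rw [hnm, h5, key]

end Stmt4Aux
namespace Stmt4Aux

/-- `1 - ⟨φ_z(w), z⟩ = (1-|z|²)/(1-⟨w,z⟩)`. -/
lemma mob_id2 (n : ℕ) {z w : EuclideanSpace ℂ (Fin n)} (hz : ‖z‖ < 1) (hw : ‖w‖ < 1) :
    (1 : ℂ) - hip n (mobius n z w) z = ((1 - ‖z‖ ^ 2 : ℝ) : ℂ) / ((1 : ℂ) - hip n w z) := by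
  rcases eq_or_ne z 0 with rfl | hz0
  · rw [mobius_zero, hip_zero, hip_zero]
    simp
  · have hq : (1 : ℂ) - hip n w z ≠ 0 := one_sub_hip_ne n hz hw
    set V := z - projLine n z w - (Real.sqrt (1 - ‖z‖ ^ 2) : ℂ) • (w - projLine n z w) with hV
    have hmob : mobius n z w = ((1 : ℂ) - hip n w z)⁻¹ • V := rfl
    have h1 : hip n (mobius n z w) z = ((1 : ℂ) - hip n w z)⁻¹ * ⟪z, V⟫ := by
      rw [show hip n (mobius n z w) z = ⟪z, mobius n z w⟫ from rfl, hmob, inner_smul_right]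
    rw [h1, hV, inner_z_V z w hz0]
    have h4 : hip n w z = ⟪z, w⟫ := rfl
    rw [h4] at hq ⊢
    set q : ℂ := (⟪z, w⟫ : ℂ) with hqdef
    push_cast
    field_simp
    ring

lemma mob_lt_one (n : ℕ) {z w : EuclideanSpace ℂ (Fin n)} (hz : ‖z‖ < 1) (hw : ‖w‖ < 1) :
    ‖mobius n z w‖ < 1 := by
  have h1 := mob_id1 n hz hw
  have hq : (1 : ℂ) - hip n w z ≠ 0 := one_sub_hip_ne n hz hw
  have hq0 : 0 < ‖(1 : ℂ) - hip n w z‖ := norm_pos_iff.mpr hq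
  have hR : 0 < (1 - ‖z‖ ^ 2) * (1 - ‖w‖ ^ 2) :=
    mul_pos (by nlinarith [norm_nonneg z]) (by nlinarith [norm_nonneg w])
  by_contra hcon
  push_neg at hcon
  have hm2 : 1 ≤ ‖mobius n z w‖ ^ 2 := by nlinarith [hcon]
  nlinarith [mul_pos hq0 hq0]

/-- `(1 - |φ_z(w)|) |1-⟨w,z⟩| ≤ 1-|z|²`. -/
lemma key_ineq (n : ℕ) {z w : EuclideanSpace ℂ (Fin n)} (hz : ‖z‖ < 1) (hw : ‖w‖ < 1) :
    (1 - ‖mobius n z w‖) * ‖(1 : ℂ) - hip n w z‖ ≤ 1 - ‖z‖ ^ 2 := by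
  have hq : (1 : ℂ) - hip n w z ≠ 0 := one_sub_hip_ne n hz hw
  have hq0 : 0 < ‖(1 : ℂ) - hip n w z‖ := norm_pos_iff.mpr hq
  have h2 := mob_id2 n hz hw
  have hnorm : ‖(1 : ℂ) - hip n (mobius n z w) z‖ * ‖(1 : ℂ) - hip n w z‖
      = 1 - ‖z‖ ^ 2 := by
    have := congrArg norm h2
    rw [norm_div] at this
    rw [this]
    have hz2 : ‖((1 - ‖z‖ ^ 2 : ℝ) : ℂ)‖ = 1 - ‖z‖ ^ 2 := by
      rw [Complex.norm_real, Real.norm_eq_abs, _root_.abs_of_nonneg (by nlinarith [norm_nonneg z])]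
    rw [hz2]
    exact div_mul_cancel₀ _ (ne_of_gt hq0)
  have hlow : 1 - ‖mobius n z w‖ ≤ ‖(1 : ℂ) - hip n (mobius n z w) z‖ := by
    have h3 : ‖hip n (mobius n z w) z‖ ≤ ‖z‖ * ‖mobius n z w‖ := norm_hip_le n z _
    have h4 := norm_sub_norm_le (1 : ℂ) (hip n (mobius n z w) z)
    rw [norm_one] at h4
    nlinarith [norm_nonneg (mobius n z w), norm_nonneg z, norm_nonneg (hip n (mobius n z w) z)]
  calc (1 - ‖mobius n z w‖) * ‖(1 : ℂ) - hip n w z‖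
      ≤ ‖(1 : ℂ) - hip n (mobius n z w) z‖ * ‖(1 : ℂ) - hip n w z‖ := by
        exact mul_le_mul_of_nonneg_right hlow hq0.le
    _ = 1 - ‖z‖ ^ 2 := hnorm

end Stmt4Aux
namespace Stmt4Aux

lemma log_to_alg {p q2 r : ℝ} (hp0 : 0 ≤ p) (hp1 : p < 1) (hq20 : 0 ≤ q2) (hq21 : q2 < 1)
    (hr0 : 0 ≤ r) (hr1 : r < 1)
    (hlog : (1/2 : ℝ) * Real.log ((1 + p) / (1 - p))
        + (1/2 : ℝ) * Real.log ((1 + q2) / (1 - q2))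
        = (1/2 : ℝ) * Real.log ((1 + r) / (1 - r))) :
    (1 + p) * (1 + q2) * (1 - r) = (1 - p) * (1 - q2) * (1 + r) := by
  have hA0 : (0:ℝ) < (1 + p) / (1 - p) := div_pos (by linarith) (by linarith)
  have hB0 : (0:ℝ) < (1 + q2) / (1 - q2) := div_pos (by linarith) (by linarith)
  have hC0 : (0:ℝ) < (1 + r) / (1 - r) := div_pos (by linarith) (by linarith)
  have hlog2 : Real.log ((1 + p) / (1 - p)) + Real.log ((1 + q2) / (1 - q2))
      = Real.log ((1 + r) / (1 - r)) := by linarith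
  have hABC : (1 + p) / (1 - p) * ((1 + q2) / (1 - q2)) = (1 + r) / (1 - r) := by
    calc (1 + p) / (1 - p) * ((1 + q2) / (1 - q2))
        = Real.exp (Real.log ((1 + p) / (1 - p) * ((1 + q2) / (1 - q2)))) :=
          (Real.exp_log (mul_pos hA0 hB0)).symm
      _ = Real.exp (Real.log ((1 + p) / (1 - p)) + Real.log ((1 + q2) / (1 - q2))) := by
          rw [Real.log_mul hA0.ne' hB0.ne']
      _ = Real.exp (Real.log ((1 + r) / (1 - r))) := by rw [hlog2]
      _ = (1 + r) / (1 - r) := Real.exp_log hC0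
  rw [div_mul_div_comm, div_eq_div_iff (by nlinarith) (by nlinarith)] at hABC
  linear_combination hABC

lemma final_calc {p q2 r T S M Z2 A2 W2 : ℝ}
    (hp0 : 0 ≤ p) (hp1 : p < 1) (hq20 : 0 ≤ q2) (hq21 : q2 < 1)
    (hr0 : 0 ≤ r) (hr1 : r < 1)
    (hT0 : 0 ≤ T) (hS0 : 0 ≤ S) (hM0 : 0 ≤ M)
    (hZpos : 0 < 1 - Z2) (hApos : 0 < 1 - A2)
    (hT : T ^ 2 * (1 - p ^ 2) = (1 - A2) * (1 - W2))
    (hS : S ^ 2 * (1 - r ^ 2) = (1 - Z2) * (1 - A2))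
    (hM : M ^ 2 * (1 - q2 ^ 2) = (1 - Z2) * (1 - W2))
    (hKey : (1 - q2) * M ≤ 1 - Z2)
    (hr2 : (1 + p) * (1 + q2) * (1 - r) = (1 - p) * (1 - q2) * (1 + r)) :
    T ≤ 2 * S := by
  have hKey2 : ((1 - q2) * M) ^ 2 ≤ (1 - Z2) ^ 2 := by
    have hnn : 0 ≤ (1 - q2) * M := mul_nonneg (by linarith) hM0
    nlinarith [hKey, hnn]
  have e1 : (1 - Z2) * ((1 - W2) * (1 - q2)) = ((1 - q2) * M) ^ 2 * (1 + q2) := by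
    linear_combination (-(1 - q2)) * hM
  have h1W : (1 - W2) * (1 - q2) ≤ (1 - Z2) * (1 + q2) := by
    have h5 : (1 - Z2) * ((1 - W2) * (1 - q2)) ≤ (1 - Z2) * ((1 - Z2) * (1 + q2)) := by
      calc (1 - Z2) * ((1 - W2) * (1 - q2)) = ((1 - q2) * M) ^ 2 * (1 + q2) := e1
        _ ≤ (1 - Z2) ^ 2 * (1 + q2) := mul_le_mul_of_nonneg_right hKey2 (by linarith)
        _ = (1 - Z2) * ((1 - Z2) * (1 + q2)) := by ring
    exact le_of_mul_le_mul_left h5 hZpos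
  have hchain : T ^ 2 * ((1 - p ^ 2) * (1 - q2)) ≤ S ^ 2 * (1 - r ^ 2) * (1 + q2) := by
    calc T ^ 2 * ((1 - p ^ 2) * (1 - q2)) = (1 - A2) * ((1 - W2) * (1 - q2)) := by
          linear_combination (1 - q2) * hT
      _ ≤ (1 - A2) * ((1 - Z2) * (1 + q2)) := mul_le_mul_of_nonneg_left h1W hApos.le
      _ = S ^ 2 * (1 - r ^ 2) * (1 + q2) := by linear_combination (-(1 + q2)) * hS
  have hrr : S ^ 2 * (1 - r ^ 2) * (1 + q2) * (1 + p)
      = S ^ 2 * ((1 - p) * (1 - q2)) * (1 + r) ^ 2 := by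
    linear_combination S ^ 2 * (1 + r) * hr2
  have hfin : T ^ 2 ≤ 4 * S ^ 2 := by
    have hD : (0:ℝ) < (1 - p) * (1 + p) ^ 2 * (1 - q2) := by
      have : (0:ℝ) < 1 - p := by linarith
      have h2 : (0:ℝ) < 1 - q2 := by linarith
      positivity
    have h7 : T ^ 2 * ((1 - p ^ 2) * (1 - q2)) * (1 + p)
        ≤ S ^ 2 * (1 - r ^ 2) * (1 + q2) * (1 + p) :=
      mul_le_mul_of_nonneg_right hchain (by linarith)
    rw [hrr] at h7
    have h8 : S ^ 2 * ((1 - p) * (1 - q2)) * (1 + r) ^ 2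
        ≤ S ^ 2 * ((1 - p) * (1 - q2)) * (2 * (1 + p)) ^ 2 := by
      have h9 : (1 + r) ^ 2 ≤ (2 * (1 + p)) ^ 2 := by nlinarith
      have h10 : (0:ℝ) ≤ S ^ 2 * ((1 - p) * (1 - q2)) := by
        have h11 : (0:ℝ) ≤ 1 - p := by linarith
        have h12 : (0:ℝ) ≤ 1 - q2 := by linarith
        positivity
      exact mul_le_mul_of_nonneg_left h9 h10
    have h6 : T ^ 2 * ((1 - p) * (1 + p) ^ 2 * (1 - q2))
        ≤ (4 * S ^ 2) * ((1 - p) * (1 + p) ^ 2 * (1 - q2)) := by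
      calc T ^ 2 * ((1 - p) * (1 + p) ^ 2 * (1 - q2))
          = T ^ 2 * ((1 - p ^ 2) * (1 - q2)) * (1 + p) := by ring
        _ ≤ S ^ 2 * ((1 - p) * (1 - q2)) * (1 + r) ^ 2 := h7
        _ ≤ S ^ 2 * ((1 - p) * (1 - q2)) * (2 * (1 + p)) ^ 2 := h8
        _ = (4 * S ^ 2) * ((1 - p) * (1 + p) ^ 2 * (1 - q2)) := by ring
    exact le_of_mul_le_mul_right h6 hD
  nlinarith [hfin, hT0, hS0]

end Stmt4Aux
/-- along the Bergman geodesic from `z` to `a` one has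
`|1 - ⟨a, γ(t)⟩| ≤ 2 |1 - ⟨a, z⟩|`. -/
theorem stmt4 (n : ℕ) (z a : EuclideanSpace ℂ (Fin n)) (hz : z ∈ Ball n) (ha : a ∈ Ball n)
    (γ : ℝ → EuclideanSpace ℂ (Fin n)) (hγ0 : γ 0 = z) (hγ1 : γ 1 = a)
    (hmem : ∀ t ∈ Set.Icc (0 : ℝ) 1, γ t ∈ Ball n)
    (hgeo : ∀ s ∈ Set.Icc (0 : ℝ) 1, ∀ t ∈ Set.Icc (0 : ℝ) 1,
      bdist n (γ s) (γ t) = |s - t| * bdist n z a) :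
    ∀ t ∈ Set.Icc (0 : ℝ) 1,
      ‖(1 : ℂ) - hip n a (γ t)‖ ≤ 2 * ‖(1 : ℂ) - hip n a z‖ := by
  intro t ht
  obtain ⟨ht0, ht1⟩ := ht
  have hzB : ‖z‖ < 1 := by simpa [Ball, mem_ball_zero_iff] using hz
  have haB : ‖a‖ < 1 := by simpa [Ball, mem_ball_zero_iff] using ha
  have huB : ‖γ t‖ < 1 := by
    simpa [Ball, mem_ball_zero_iff] using hmem t ⟨ht0, ht1⟩
  -- additivity of the Bergman distance along the geodesic
  have hbd1 : bdist n a (γ t) = (1 - t) * bdist n z a := by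
    have h := hgeo 1 ⟨zero_le_one, le_refl 1⟩ t ⟨ht0, ht1⟩
    rw [hγ1] at h
    rwa [_root_.abs_of_nonneg (by linarith : (0:ℝ) ≤ 1 - t)] at h
  have hbd2 : bdist n z (γ t) = t * bdist n z a := by
    have h := hgeo 0 ⟨le_refl 0, zero_le_one⟩ t ⟨ht0, ht1⟩
    rw [hγ0] at h
    rwa [show |(0:ℝ) - t| = t by rw [zero_sub, abs_neg, _root_.abs_of_nonneg ht0]] at h
  have hsum : bdist n a (γ t) + bdist n z (γ t) = bdist n z a := by
    rw [hbd1, hbd2]; ring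
  rw [show bdist n a (γ t)
      = (1/2 : ℝ) * Real.log ((1 + ‖mobius n a (γ t)‖) / (1 - ‖mobius n a (γ t)‖)) from rfl,
    show bdist n z (γ t)
      = (1/2 : ℝ) * Real.log ((1 + ‖mobius n z (γ t)‖) / (1 - ‖mobius n z (γ t)‖)) from rfl,
    show bdist n z a
      = (1/2 : ℝ) * Real.log ((1 + ‖mobius n z a‖) / (1 - ‖mobius n z a‖)) from rfl] at hsum
  have hr2 := Stmt4Aux.log_to_alg (norm_nonneg (mobius n a (γ t)))
    (Stmt4Aux.mob_lt_one n haB huB) (norm_nonneg (mobius n z (γ t)))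
    (Stmt4Aux.mob_lt_one n hzB huB) (norm_nonneg (mobius n z a))
    (Stmt4Aux.mob_lt_one n hzB haB) hsum
  -- Rudin identities
  have hT := Stmt4Aux.mob_id1 n haB huB
  have hS := Stmt4Aux.mob_id1 n hzB haB
  have hM := Stmt4Aux.mob_id1 n hzB huB
  have hKey := Stmt4Aux.key_ineq n hzB huB
  have hZpos : (0:ℝ) < 1 - ‖z‖ ^ 2 := by nlinarith [norm_nonneg z, hzB]
  have hApos : (0:ℝ) < 1 - ‖a‖ ^ 2 := by nlinarith [norm_nonneg a, haB]
  have hTT : ‖(1:ℂ) - hip n a (γ t)‖ = ‖(1:ℂ) - hip n (γ t) a‖ := by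
    have hc : hip n a (γ t) = (starRingEnd ℂ) (hip n (γ t) a) :=
      (inner_conj_symm (γ t) a).symm
    rw [hc, show (1:ℂ) - (starRingEnd ℂ) (hip n (γ t) a)
      = (starRingEnd ℂ) ((1:ℂ) - hip n (γ t) a) by rw [map_sub, map_one], RCLike.norm_conj]
  rw [hTT]
  exact Stmt4Aux.final_calc (norm_nonneg (mobius n a (γ t)))
    (Stmt4Aux.mob_lt_one n haB huB) (norm_nonneg (mobius n z (γ t)))
    (Stmt4Aux.mob_lt_one n hzB huB) (norm_nonneg (mobius n z a))
    (Stmt4Aux.mob_lt_one n hzB haB)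
    (norm_nonneg _) (norm_nonneg _) (norm_nonneg _) hZpos hApos hT hS hM hKey hr2
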